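/- If G has an isolated edge e = {u,v} (both u and v have degree 1 and are adjacent), and H is the induced subgraph of G on V(G) \ {u,v}, then c(G) ≤ c(H). -/

import Mathlib

open Classical

variable {V : Type*}

/-- A finset of vertices is independent if no two of its members are adjacent. -/
def IsIndepSet (G : SimpleGraph V) (s : Finset V) : Prop :=
  ∀ u ∈ s, ∀ v ∈ s, ¬ G.Adj u v

/-- The set of faces of the independence complex of `G` (including the empty face). -/
def IndFaces (G : SimpleGraph V) : Set (Finset V) :=
  {s | IsIndepSet G s}

/-- `P` is a matching on the face poset `Δ`: a set of disjoint covering pairs. -/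
def IsPosetMatching (Δ : Set (Finset V)) (P : Set (Finset V × Finset V)) : Prop :=
  (∀ p ∈ P, p.1 ∈ Δ ∧ p.2 ∈ Δ ∧ p.1 ⊆ p.2 ∧ p.2.card = p.1.card + 1) ∧
  (∀ p ∈ P, ∀ q ∈ P, p ≠ q → p.1 ≠ q.1 ∧ p.1 ≠ q.2 ∧ p.2 ≠ q.1 ∧ p.2 ≠ q.2)

/-- A cycle in a matching: distinct matched pairs `{σ₁⊂τ₁},…,{σₙ⊂τₙ}`, `n > 1`,
with `σ_{i+1} ⊂ τ_i` for `i < n` and `σ₁ ⊂ τₙ`. -/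
def MatchingHasCycle (P : Set (Finset V × Finset V)) : Prop :=
  ∃ n : ℕ, 2 ≤ n ∧ ∃ f : ℕ → Finset V × Finset V,
    (∀ i < n, f i ∈ P) ∧ Set.InjOn f (Set.Iio n) ∧
    (∀ i, i + 1 < n → (f (i + 1)).1 ⊂ (f i).2) ∧ (f 0).1 ⊂ (f (n - 1)).2

/-- An acyclic (Morse) matching on the face poset `Δ`. -/
def IsAcyclicMatching (Δ : Set (Finset V)) (P : Set (Finset V × Finset V)) : Prop :=
  IsPosetMatching Δ P ∧ ¬ MatchingHasCycle P

/-- The critical (unmatched) faces of `Δ` with respect to `P`. -/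
def criticalSet (Δ : Set (Finset V)) (P : Set (Finset V × Finset V)) : Set (Finset V) :=
  {s ∈ Δ | ∀ p ∈ P, s ≠ p.1 ∧ s ≠ p.2}

/-- `cInvariant G` is the minimal number of critical cells in an acyclic matching on the
face poset of the independence complex of `G`. -/
noncomputable def cInvariant (G : SimpleGraph V) : ℕ :=
  sInf {n | ∃ P, IsAcyclicMatching (IndFaces G) P ∧ (criticalSet (IndFaces G) P).ncard = n}

/-- If `G` has an isolated edge `{u,v}` (both endpoints have degree one) and `H` is the
induced subgraph on the complement of `{u,v}`, then `c(G) ≤ c(H)`. -/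
theorem statement_3 {V : Type*} [Finite V] (G : SimpleGraph V) (u v : V)
    (huv : G.Adj u v) (hu : ∀ w, G.Adj u w → w = v) (hv : ∀ w, G.Adj v w → w = u) :
    cInvariant G ≤ cInvariant (G.induce ({u, v} : Set V)ᶜ) := by
  classical
  set S : Set V := ({u, v} : Set V)ᶜ with hSdef
  haveI : Fintype V := Fintype.ofFinite V
  haveI : Fintype ↥S := Set.Finite.fintype (Set.toFinite S)
  set H : SimpleGraph S := G.induce S with hHdef
  have hune : u ≠ v := huv.ne
  have haS : ∀ a : S, (a : V) ≠ u ∧ (a : V) ≠ v := by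
    intro a
    have h := a.2
    simp only [hSdef, Set.mem_compl_iff, Set.mem_insert_iff, Set.mem_singleton_iff,
      not_or] at h
    exact h
  set φ : Finset S → Finset V := fun σ => σ.map (Function.Embedding.subtype _) with hφdef
  have hmemφ : ∀ (σ : Finset S) (x : V), x ∈ φ σ ↔ ∃ a : S, a ∈ σ ∧ (a : V) = x := by
    intro σ x; simp [hφdef]
  have huφ : ∀ σ : Finset S, u ∉ φ σ := by
    intro σ h
    obtain ⟨a, -, ha⟩ := (hmemφ σ u).1 h
    exact (haS a).1 ha
  have hvφ : ∀ σ : Finset S, v ∉ φ σ := by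
    intro σ h
    obtain ⟨a, -, ha⟩ := (hmemφ σ v).1 h
    exact (haS a).2 ha
  have hunotins : ∀ σ : Finset S, u ∉ insert v (φ σ) := by
    intro σ h
    rcases Finset.mem_insert.1 h with h | h
    · exact hune h
    · exact huφ σ h
  have hφmono : ∀ σ τ : Finset S, insert v (φ σ) ⊆ insert v (φ τ) → σ ⊆ τ := by
    intro σ τ h a ha
    have hx : (a : V) ∈ insert v (φ τ) :=
      h (Finset.mem_insert_of_mem ((hmemφ σ a).2 ⟨a, ha, rfl⟩))
    rcases Finset.mem_insert.1 hx with hx | hx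
    · exact absurd hx (haS a).2
    · obtain ⟨b, hb, hba⟩ := (hmemφ τ _).1 hx
      rwa [show b = a from Subtype.ext hba] at hb
  have hφinj : ∀ σ τ : Finset S, insert v (φ σ) = insert v (φ τ) → σ = τ := fun σ τ h =>
    Finset.Subset.antisymm (hφmono σ τ (le_of_eq h)) (hφmono τ σ (le_of_eq h.symm))
  have hφssub : ∀ σ τ : Finset S, insert v (φ σ) ⊂ insert v (φ τ) → σ ⊂ τ := by
    intro σ τ h
    refine Finset.ssubset_iff_subset_ne.2 ⟨hφmono σ τ h.subset, ?_⟩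
    rintro rfl
    exact h.ne rfl
  have hφcard : ∀ σ : Finset S, (insert v (φ σ)).card = σ.card + 1 := by
    intro σ
    rw [Finset.card_insert_of_notMem (hvφ σ), hφdef, Finset.card_map]
  have hindep2 : ∀ σ : Finset S, IsIndepSet H σ → IsIndepSet G (insert v (φ σ)) := by
    intro σ hσ x hx y hy hadj
    rcases Finset.mem_insert.1 hx with rfl | hx
    · rcases Finset.mem_insert.1 hy with rfl | hy
      · exact G.loopless.irrefl _ hadj
      · obtain ⟨b, hb, rfl⟩ := (hmemφ σ _).1 hy
        exact (haS b).1 (hv _ hadj)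
    · obtain ⟨a, ha, rfl⟩ := (hmemφ σ _).1 hx
      rcases Finset.mem_insert.1 hy with rfl | hy
      · exact (haS a).1 (hv _ hadj.symm)
      · obtain ⟨b, hb, rfl⟩ := (hmemφ σ _).1 hy
        exact hσ a ha b hb hadj
  have hindep1 : ∀ s : Finset V, IsIndepSet G s → u ∉ s → v ∉ s →
      IsIndepSet G (insert u s) := by
    intro s hs hus hvs x hx y hy hadj
    rcases Finset.mem_insert.1 hx with hx | hx
    · rcases Finset.mem_insert.1 hy with hy | hy
      · rw [hx, hy] at hadj
        exact G.loopless.irrefl _ hadj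
      · rw [hx] at hadj
        rw [hu y hadj] at hy
        exact hvs hy
    · rcases Finset.mem_insert.1 hy with hy | hy
      · rw [hy] at hadj
        rw [hu x hadj.symm] at hx
        exact hvs hx
      · exact hs x hx y hy hadj
  -- obtain an optimal acyclic matching on H
  have hne : {n | ∃ P, IsAcyclicMatching (IndFaces H) P ∧
      (criticalSet (IndFaces H) P).ncard = n}.Nonempty := by
    refine ⟨_, ∅, ⟨⟨fun p hp => absurd hp (Set.notMem_empty p),
      fun p hp => absurd hp (Set.notMem_empty p)⟩, ?_⟩, rfl⟩
    rintro ⟨n, hn, f, hf, -⟩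
    exact absurd (hf 0 (by omega)) (Set.notMem_empty _)
  obtain ⟨P, hP, hPcard⟩ := Nat.sInf_mem hne
  set L : Finset S × Finset S → Finset V × Finset V :=
    fun q => (insert v (φ q.1), insert v (φ q.2)) with hLdef
  set Q : Set (Finset V × Finset V) :=
    {p | ∃ s : Finset V, IsIndepSet G s ∧ u ∉ s ∧ v ∉ s ∧ p = (s, insert u s)} ∪ L '' P
    with hQdef
  have hmatch : IsPosetMatching (IndFaces G) Q := by
    constructor
    · rintro p (⟨s, hs, hus, hvs, rfl⟩ | ⟨a, haP, rfl⟩)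
      · exact ⟨hs, hindep1 s hs hus hvs, Finset.subset_insert _ _,
          Finset.card_insert_of_notMem hus⟩
      · obtain ⟨h1, h2, h3, h4⟩ := hP.1.1 a haP
        refine ⟨hindep2 _ h1, hindep2 _ h2, ?_, ?_⟩
        · exact Finset.insert_subset_insert _ (Finset.map_subset_map.2 h3)
        · rw [hLdef]
          dsimp only
          rw [hφcard, hφcard, h4]
    · intro p hp q hq hpq
      rcases hp with ⟨s, hs, hus, hvs, rfl⟩ | ⟨a, haP, rfl⟩ <;>
        rcases hq with ⟨t, ht, hut, hvt, rfl⟩ | ⟨b, hbP, rfl⟩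
      · have hst : s ≠ t := by rintro rfl; exact hpq rfl
        refine ⟨hst, ?_, ?_, ?_⟩
        · intro h
          have h' : s = insert u t := h
          apply hus; rw [h']; exact Finset.mem_insert_self u t
        · intro h
          have h' : insert u s = t := h
          apply hut; rw [← h']; exact Finset.mem_insert_self u s
        · intro h
          have h' : insert u s = insert u t := h
          apply hst
          have h2 := congrArg (fun z => Finset.erase z u) h'
          rwa [Finset.erase_insert hus, Finset.erase_insert hut] at h2
      · refine ⟨?_, ?_, ?_, ?_⟩
        · intro h
          have h' : s = insert v (φ b.1) := h
          apply hvs; rw [h']; exact Finset.mem_insert_self v _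
        · intro h
          have h' : s = insert v (φ b.2) := h
          apply hvs; rw [h']; exact Finset.mem_insert_self v _
        · intro h
          have h' : insert u s = insert v (φ b.1) := h
          exact hunotins b.1 (by rw [← h']; exact Finset.mem_insert_self u s)
        · intro h
          have h' : insert u s = insert v (φ b.2) := h
          exact hunotins b.2 (by rw [← h']; exact Finset.mem_insert_self u s)
      · refine ⟨?_, ?_, ?_, ?_⟩
        · intro h
          have h' : insert v (φ a.1) = t := h
          apply hvt; rw [← h']; exact Finset.mem_insert_self v _
        · intro h
          have h' : insert v (φ a.1) = insert u t := h
          exact hunotins a.1 (by rw [h']; exact Finset.mem_insert_self u t)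
        · intro h
          have h' : insert v (φ a.2) = t := h
          apply hvt; rw [← h']; exact Finset.mem_insert_self v _
        · intro h
          have h' : insert v (φ a.2) = insert u t := h
          exact hunotins a.2 (by rw [h']; exact Finset.mem_insert_self u t)
      · have hab : a ≠ b := by rintro rfl; exact hpq rfl
        obtain ⟨h1, h2, h3, h4⟩ := hP.1.2 a haP b hbP hab
        exact ⟨fun h => h1 (hφinj _ _ h), fun h => h2 (hφinj _ _ h),
          fun h => h3 (hφinj _ _ h), fun h => h4 (hφinj _ _ h)⟩
  have hnocycle : ¬ MatchingHasCycle Q := by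
    rintro ⟨n, hn2, f, hfQ, hfinj, hstep, hwrap⟩
    have hcard2 : ∀ i < n, (f i).2.card = (f i).1.card + 1 :=
      fun i hi => (hmatch.1 _ (hfQ i hi)).2.2.2
    have hstep' : ∀ i, i + 1 < n → (f (i + 1)).1.card ≤ (f i).1.card := by
      intro i hi
      have h1 := Finset.card_lt_card (hstep i hi)
      have h2 := hcard2 i (by omega)
      omega
    have hmono : ∀ k i, i + k < n → (f (i + k)).1.card ≤ (f i).1.card := by
      intro k
      induction k with
      | zero => exact fun i _ => le_rfl
      | succ k ih =>
        intro i hik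
        have e : i + (k + 1) = (i + k) + 1 := by omega
        rw [e]
        exact le_trans (hstep' (i + k) (by omega)) (ih i (by omega))
    have hwrap' : (f 0).1.card ≤ (f (n - 1)).1.card := by
      have h1 := Finset.card_lt_card hwrap
      have h2 := hcard2 (n - 1) (by omega)
      omega
    have hconst : ∀ i < n, (f i).1.card = (f 0).1.card := by
      intro i hi
      have h1 : (f i).1.card ≤ (f 0).1.card := by
        have h := hmono i 0 (by omega)
        rwa [Nat.zero_add] at h
      have h2 : (f (n - 1)).1.card ≤ (f i).1.card := by
        have h := hmono (n - 1 - i) i (by omega)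
        rwa [show i + (n - 1 - i) = n - 1 from by omega] at h
      omega
    by_cases hall : ∀ i < n, f i ∈ L '' P
    · apply hP.2
      have hch : ∀ i, i < n → ∃ a, a ∈ P ∧ L a = f i := by
        intro i hi
        obtain ⟨a, haP, ha⟩ := hall i hi
        exact ⟨a, haP, ha⟩
      choose! g hg1 hg2 using hch
      refine ⟨n, hn2, g, fun i hi => hg1 i hi, ?_, ?_, ?_⟩
      · intro a ha b hb hab
        apply hfinj ha hb
        rw [← hg2 a ha, ← hg2 b hb, hab]
      · intro i hi
        have h := hstep i hi
        rw [← hg2 (i + 1) hi, ← hg2 i (by omega)] at h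
        exact hφssub _ _ h
      · have h := hwrap
        rw [← hg2 0 (by omega), ← hg2 (n - 1) (by omega)] at h
        exact hφssub _ _ h
    · push_neg at hall
      obtain ⟨i, hi, hiQ2⟩ := hall
      rcases hfQ i hi with ⟨s, hs, hus, hvs, hfi⟩ | hmem
      swap
      · exact hiQ2 hmem
      set j := if i + 1 < n then i + 1 else 0 with hj
      have hjn : j < n := by rw [hj]; split <;> omega
      have hji : j ≠ i := by rw [hj]; split <;> omega
      have hss : (f j).1 ⊂ (f i).2 := by
        rw [hj]
        split
        · next hc => exact hstep i hc
        · next hc =>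
            rw [show i = n - 1 from by omega] at hfi ⊢
            exact hwrap
      have hunot : u ∉ (f j).1 := by
        rcases hfQ j hjn with ⟨t, ht, hut, hvt, hfj'⟩ | ⟨b, hbP, hfj'⟩
        · rw [hfj']; exact hut
        · rw [← hfj']; exact hunotins b.1
      have hsub : (f j).1 ⊆ s := by
        intro x hx
        have hxm := hss.subset hx
        rw [hfi] at hxm
        rcases Finset.mem_insert.1 hxm with rfl | h
        · exact absurd hx hunot
        · exact h
      have hcardeq : (f j).1.card = s.card := by
        have h1 := hconst j hjn
        have h2 := hconst i hi
        have h3 : (f i).1.card = s.card := by rw [hfi]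
        omega
      have heq : (f j).1 = s := Finset.eq_of_subset_of_card_le hsub (le_of_eq hcardeq.symm)
      have hne' : f j ≠ f i := fun h => hji (hfinj hjn hi h)
      have hfinal := (hmatch.2 (f j) (hfQ j hjn) (f i) (hfQ i hi) hne').1
      apply hfinal
      rw [heq, hfi]
  have hcrit : criticalSet (IndFaces G) Q ⊆
      (fun σ : Finset S => insert v (φ σ)) '' criticalSet (IndFaces H) P := by
    rintro s ⟨hsInd, hscrit⟩
    by_cases hvs : v ∈ s
    · have hus : u ∉ s := fun hus => hsInd u hus v hvs huv
      have htS : ∀ x ∈ s.erase v, x ∈ S := by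
        intro x hx
        have hxv : x ≠ v := Finset.ne_of_mem_erase hx
        have hxu : x ≠ u := fun h => hus (h ▸ Finset.mem_of_mem_erase hx)
        simp only [hSdef, Set.mem_compl_iff, Set.mem_insert_iff, Set.mem_singleton_iff, not_or]
        exact ⟨hxu, hxv⟩
      set σ : Finset S := (s.erase v).subtype (· ∈ S) with hσ
      have htφ : φ σ = s.erase v := by
        rw [hφdef, hσ]
        exact Finset.subtype_map_of_mem htS
      have hs' : s = insert v (φ σ) := by
        rw [htφ, Finset.insert_erase hvs]
      have hσInd : IsIndepSet H σ := by
        intro a ha b hb hadj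
        have ha' : (a : V) ∈ s := Finset.mem_of_mem_erase (htφ ▸ (hmemφ σ _).2 ⟨a, ha, rfl⟩)
        have hb' : (b : V) ∈ s := Finset.mem_of_mem_erase (htφ ▸ (hmemφ σ _).2 ⟨b, hb, rfl⟩)
        exact hsInd _ ha' _ hb' hadj
      refine ⟨σ, ⟨hσInd, ?_⟩, hs'.symm⟩
      intro q hq
      constructor
      · intro h
        exact (hscrit (L q) (Or.inr ⟨q, hq, rfl⟩)).1 (by rw [hs', h])
      · intro h
        exact (hscrit (L q) (Or.inr ⟨q, hq, rfl⟩)).2 (by rw [hs', h])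
    · exfalso
      by_cases hus : u ∈ s
      · have hind : IsIndepSet G (s.erase u) := fun x hx y hy =>
          hsInd x (Finset.mem_of_mem_erase hx) y (Finset.mem_of_mem_erase hy)
        have hp : (s.erase u, insert u (s.erase u)) ∈ Q :=
          Or.inl ⟨s.erase u, hind, Finset.notMem_erase u s,
            fun h => hvs (Finset.mem_of_mem_erase h), rfl⟩
        exact (hscrit _ hp).2 (Finset.insert_erase hus).symm
      · have hp : (s, insert u s) ∈ Q := Or.inl ⟨s, hsInd, hus, hvs, rfl⟩
        exact (hscrit _ hp).1 rfl
  calc cInvariant G ≤ (criticalSet (IndFaces G) Q).ncard :=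
        Nat.sInf_le ⟨Q, ⟨hmatch, hnocycle⟩, rfl⟩
    _ ≤ ((fun σ : Finset S => insert v (φ σ)) '' criticalSet (IndFaces H) P).ncard :=
        Set.ncard_le_ncard hcrit (Set.toFinite _)
    _ ≤ (criticalSet (IndFaces H) P).ncard := Set.ncard_image_le (Set.toFinite _)
    _ = cInvariant H := hPcard
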